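/- Kolmogorov–Landau inequality on the torus: for any twice continuously differentiable 2π-periodic function h, ‖∂_x h‖_{L^∞}² ≤ 2 ‖h‖_{L^∞} ‖∂_x² h‖_{L^∞}. -/

import Mathlib

open Set

private lemma itdw_eq {f : ℝ → ℝ} (hf : ContDiff ℝ 2 f) {a b y : ℝ} (hab : a < b)
    (hy : y ∈ Set.Icc a b) :
    iteratedDerivWithin 2 f (Set.Icc a b) y = iteratedDeriv 2 f y := by
  have hu := uniqueDiffOn_Icc hab
  have hdiff : Differentiable ℝ f := hf.differentiable two_ne_zero
  have hd2 : Differentiable ℝ (deriv f) := by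
    have := (contDiff_succ_iff_deriv.mp (show ContDiff ℝ (1+1) f from by norm_num [hf])).2.2
    exact this.differentiable one_ne_zero
  have e1 : ∀ z ∈ Set.Icc a b, iteratedDerivWithin 1 f (Set.Icc a b) z = deriv f z := by
    intro z hz
    rw [iteratedDerivWithin_one]
    exact (hdiff z).derivWithin (hu z hz)
  rw [show (2:ℕ) = 1 + 1 from rfl, iteratedDerivWithin_succ,
    derivWithin_congr e1 (e1 y hy), (hd2 y).derivWithin (hu y hy),
    iteratedDeriv_succ, iteratedDeriv_one]

private lemma taylor_bd {f : ℝ → ℝ} (hf : ContDiff ℝ 2 f) {M₂ : ℝ}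
    (hM : ∀ y, |iteratedDeriv 2 f y| ≤ M₂) (x t : ℝ) (ht : 0 < t) :
    |f (x + t) - f x - t * deriv f x| ≤ M₂ * t ^ 2 / 2 := by
  have hlt : x < x + t := by linarith
  have hu := uniqueDiffOn_Icc hlt
  have hdiff : Differentiable ℝ f := hf.differentiable two_ne_zero
  have hd2 : Differentiable ℝ (deriv f) := by
    have := (contDiff_succ_iff_deriv.mp (show ContDiff ℝ (1+1) f from by norm_num [hf])).2.2
    exact this.differentiable one_ne_zero
  have e1 : ∀ z ∈ Set.Icc x (x+t), iteratedDerivWithin 1 f (Set.Icc x (x+t)) z = deriv f z := by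
    intro z hz
    rw [iteratedDerivWithin_one]
    exact (hdiff z).derivWithin (hu z hz)
  obtain ⟨y, hy, hey⟩ := taylor_mean_remainder_lagrange (n := 1) hlt.ne
    (by rw [uIcc_of_le hlt.le]; exact ((hf.of_le one_le_two).contDiffOn))
    (by rw [uIcc_of_le hlt.le, uIoo_of_le hlt.le]; exact (((hd2.differentiableOn).congr (fun z hz => e1 z (Ioo_subset_Icc_self hz)))))
  rw [uIoo_of_le hlt.le] at hy
  rw [uIcc_of_le hlt.le] at hey
  have hyI : y ∈ Set.Icc x (x+t) := Ioo_subset_Icc_self hy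
  rw [itdw_eq hf hlt hyI] at hey
  have htay : taylorWithinEval f 1 (Set.Icc x (x+t)) x (x+t) = f x + t * deriv f x := by
    rw [show (1:ℕ) = 0 + 1 from rfl, taylorWithinEval_succ, taylor_within_zero_eval]
    rw [e1 x (by simp [le_of_lt hlt])]
    simp
  rw [htay] at hey
  have : f (x + t) - f x - t * deriv f x = iteratedDeriv 2 f y * t^2 / 2 := by
    rw [show f (x + t) - f x - t * deriv f x = f (x+t) - (f x + t * deriv f x) by ring, hey]
    norm_num
  rw [this, abs_div, abs_mul]
  have h2 : |(2:ℝ)| = 2 := by norm_num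
  rw [h2, abs_of_nonneg (sq_nonneg t)]
  have : |iteratedDeriv 2 f y| * t ^ 2 ≤ M₂ * t ^ 2 :=
    mul_le_mul_of_nonneg_right (hM y) (sq_nonneg t)
  linarith

private lemma bdd_abs {f : ℝ → ℝ} (hf : Continuous f)
    (hp : Function.Periodic f (2 * Real.pi)) :
    BddAbove (Set.range fun x => |f x|) := by
  have h2 : Function.Periodic (fun x => |f x|) (2 * Real.pi) := fun x => by simp [hp x]
  rw [← h2.image_Icc (by positivity) 0]
  exact (isCompact_Icc.image hf.abs).bddAbove

/-- Kolmogorov–Landau inequality on the torus: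
`‖∂ₓh‖_{L^∞}² ≤ 2 ‖h‖_{L^∞} ‖∂ₓ²h‖_{L^∞}` for `C²` `2π`-periodic functions. -/
theorem kolmogorov_landau (h : ℝ → ℝ) (hs : ContDiff ℝ 2 h)
    (hp : Function.Periodic h (2 * Real.pi)) :
    (⨆ x : ℝ, |deriv h x|) ^ 2 ≤
      2 * (⨆ x : ℝ, |h x|) * (⨆ x : ℝ, |iteratedDeriv 2 h x|) := by
  have hdiff : Differentiable ℝ h := hs.differentiable two_ne_zero
  have hcd : ContDiff ℝ 1 (deriv h) :=
    (contDiff_succ_iff_deriv.mp (show ContDiff ℝ (1+1) h from by norm_num [hs])).2.2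
  have hd2 : Differentiable ℝ (deriv h) := hcd.differentiable one_ne_zero
  have hit2 : iteratedDeriv 2 h = deriv (deriv h) := by
    rw [iteratedDeriv_succ, iteratedDeriv_one]
  have hp1 : Function.Periodic (deriv h) (2 * Real.pi) := by
    intro x
    have e : (fun y => h (y + 2 * Real.pi)) = h := funext hp
    rw [← deriv_comp_add_const h (2 * Real.pi) x, e]
  have hp2 : Function.Periodic (iteratedDeriv 2 h) (2 * Real.pi) := by
    rw [hit2]
    intro x
    have e : (fun y => deriv h (y + 2 * Real.pi)) = deriv h := funext hp1
    rw [← deriv_comp_add_const (deriv h) (2 * Real.pi) x, e]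
  have hc2 : Continuous (iteratedDeriv 2 h) := by
    rw [hit2]; exact hcd.continuous_deriv le_rfl
  have b0 := bdd_abs hs.continuous hp
  have b1 := bdd_abs hd2.continuous hp1
  have b2 := bdd_abs hc2 hp2
  set M₀ := ⨆ x : ℝ, |h x| with hM₀def
  set M₁ := ⨆ x : ℝ, |deriv h x| with hM₁def
  set M₂ := ⨆ x : ℝ, |iteratedDeriv 2 h x| with hM₂def
  have hM₀ : ∀ y, |h y| ≤ M₀ := fun y => le_ciSup b0 y
  have hM₂ : ∀ y, |iteratedDeriv 2 h y| ≤ M₂ := fun y => le_ciSup b2 y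
  have M₀nn : 0 ≤ M₀ := le_trans (abs_nonneg _) (hM₀ 0)
  have M₂nn : 0 ≤ M₂ := le_trans (abs_nonneg _) (hM₂ 0)
  have M₁nn : 0 ≤ M₁ := le_trans (abs_nonneg _) (le_ciSup b1 0)
  -- key pointwise bound
  have key : ∀ x : ℝ, ∀ t : ℝ, 0 < t → 2 * t * |deriv h x| ≤ 2 * M₀ + M₂ * t ^ 2 := by
    intro x t ht
    have A := taylor_bd hs hM₂ x t ht
    have hg : ContDiff ℝ 2 (fun y : ℝ => h (-y)) := hs.comp (contDiff_id.neg)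
    have hMg : ∀ y, |iteratedDeriv 2 (fun y : ℝ => h (-y)) y| ≤ M₂ := by
      intro y
      rw [iteratedDeriv_comp_neg]
      simpa using hM₂ (-y)
    have B := taylor_bd hg hMg (-x) t ht
    have e1 : -(-x + t) = x - t := by ring
    simp only [deriv_comp_neg, e1, neg_neg, mul_neg, sub_neg_eq_add] at B
    have a1 := abs_le.mp A
    have a2 := abs_le.mp B
    have a3 := abs_le.mp (hM₀ (x + t))
    have a4 := abs_le.mp (hM₀ (x - t))
    rcases abs_cases (deriv h x) with ⟨he, _⟩ | ⟨he, _⟩ <;> rw [he] <;>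
      obtain ⟨a11, a12⟩ := a1 <;> obtain ⟨a21, a22⟩ := a2 <;> linarith
  -- pointwise squared bound
  have hsq : ∀ x : ℝ, |deriv h x| ^ 2 ≤ 2 * M₀ * M₂ := by
    intro x
    set d := |deriv h x| with hd
    have hd0 : 0 ≤ d := abs_nonneg _
    rcases eq_or_lt_of_le hd0 with hzero | hdp
    · rw [← hzero]
      norm_num
      exact mul_nonneg (mul_nonneg (by norm_num) M₀nn) M₂nn
    rcases eq_or_lt_of_le M₂nn with h2z | h2p
    · exfalso
      have ht : 0 < (2 * M₀ + 1) / (2 * d) := by positivity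
      have hk := key x ((2 * M₀ + 1) / (2 * d)) ht
      have e : 2 * ((2 * M₀ + 1) / (2 * d)) * d = 2 * M₀ + 1 := by
        field_simp
      rw [← h2z] at hk
      rw [e] at hk
      linarith
    · have hk := key x (d / M₂) (by positivity)
      have e : M₂ * (2 * (d / M₂) * d) = 2 * d ^ 2 := by
        field_simp
      have e2 : M₂ * (M₂ * (d / M₂) ^ 2) = d ^ 2 := by
        field_simp
      have := mul_le_mul_of_nonneg_left hk M₂nn
      rw [mul_add, e2, e] at this
      nlinarith
  have hb : ∀ x : ℝ, |deriv h x| ≤ Real.sqrt (2 * M₀ * M₂) := by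
    intro x
    rw [show |deriv h x| = Real.sqrt (|deriv h x| ^ 2) from (Real.sqrt_sq (abs_nonneg _)).symm]
    exact Real.sqrt_le_sqrt (hsq x)
  have hle : M₁ ≤ Real.sqrt (2 * M₀ * M₂) := ciSup_le hb
  calc M₁ ^ 2 ≤ Real.sqrt (2 * M₀ * M₂) ^ 2 := by
        exact pow_le_pow_left₀ M₁nn hle 2
    _ = 2 * M₀ * M₂ := Real.sq_sqrt (by positivity)
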